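/- For α ≥ 1 and β with (2α+2)/(2α+1) ≤ β, the function g_β(ρ) = tan^{2α(β−1)}(ρ/2) · sin^{β−2}(ρ) · (2α + cos ρ) is nondecreasing on (0,π). -/

import Mathlib

open Real

private lemma N_nonneg (α β c : ℝ) (hα : 1 ≤ α) (hβ : 2*α+2 ≤ (2*α+1)*β)
    (h1 : -1 ≤ c) (h2 : c ≤ 1) :
    0 ≤ (2*α*(β-1) + (β-2)*c)*(2*α + c) - (1 - c^2) := by
  have hβ1 : 0 < β - 1 := by nlinarith
  rcases le_or_gt ((2+4*α)*β) (2+6*α) with h | h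
  · have t1 : 0 ≤ (2*α+1)*((2*α+1)*β - (2*α+2)) := by
      apply mul_nonneg <;> linarith
    have t2 : 0 ≤ (1-c)*((2+6*α)-(2+4*α)*β) := by
      apply mul_nonneg <;> linarith
    have t3 : 0 ≤ (β-1)*(1-c)^2 := mul_nonneg (le_of_lt hβ1) (sq_nonneg _)
    nlinarith [t1, t2, t3]
  · have hD : 0 ≤ α^2*(4*β-5) - (β-1) := by
      nlinarith [mul_nonneg (by linarith : (0:ℝ) ≤ 2*α-1)
        (by linarith : (0:ℝ) ≤ (2+4*α)*β - (2+6*α)),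
        mul_nonneg (by linarith : (0:ℝ) ≤ α) (by linarith : (0:ℝ) ≤ α-1)]
    nlinarith [sq_nonneg ((β-1)*c + α*(2*β-3)), hD, hβ1]

private lemma g_hasDerivAt (α β : ℝ) {x : ℝ} (hx : x ∈ Set.Ioo 0 π) :
    HasDerivAt (fun ρ : ℝ =>
      Real.tan (ρ/2) ^ (2*α*(β - 1)) * Real.sin ρ ^ (β - 2) * (2*α + Real.cos ρ))
      (Real.tan (x/2) ^ (2*α*(β-1)) * Real.sin x ^ (β - 3) *
        ((2*α*(β-1) + (β-2)*Real.cos x)*(2*α + Real.cos x) - (Real.sin x)^2)) x := by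
  obtain ⟨hx0, hxπ⟩ := hx
  have hc2 : 0 < Real.cos (x/2) := Real.cos_pos_of_mem_Ioo
    ⟨by linarith [Real.pi_pos], by linarith⟩
  have hs2 : 0 < Real.sin (x/2) := Real.sin_pos_of_pos_of_lt_pi (by linarith)
    (by linarith [Real.pi_pos])
  have ht : 0 < Real.tan (x/2) := by
    rw [Real.tan_eq_sin_div_cos]; positivity
  have hs : 0 < Real.sin x := Real.sin_pos_of_pos_of_lt_pi hx0 hxπ
  -- derivative of tan (·/2)
  have h1 : HasDerivAt (fun y : ℝ => Real.tan (y/2)) (1 / Real.cos (x/2)^2 * (1/2)) x := by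
    exact (Real.hasDerivAt_tan hc2.ne').comp x ((hasDerivAt_id x).div_const 2)
  have h2 : HasDerivAt (fun y : ℝ => Real.tan (y/2) ^ (2*α*(β-1)))
      (1 / Real.cos (x/2)^2 * (1/2) * (2*α*(β-1)) * Real.tan (x/2) ^ (2*α*(β-1) - 1)) x :=
    h1.rpow_const (Or.inl ht.ne')
  have h3 : HasDerivAt (fun y : ℝ => Real.sin y ^ (β-2))
      (Real.cos x * (β-2) * Real.sin x ^ (β-2-1)) x :=
    (Real.hasDerivAt_sin x).rpow_const (Or.inl hs.ne')
  have h4 : HasDerivAt (fun y : ℝ => 2*α + Real.cos y) (-Real.sin x) x := by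
    simpa using (Real.hasDerivAt_cos x).const_add (2*α)
  have h5 := (h2.mul h3).mul h4
  refine h5.congr_deriv ?_
  simp only [Pi.mul_apply]
  -- now prove the derivative expressions are equal
  have hsin2 : Real.sin x = 2 * Real.sin (x/2) * Real.cos (x/2) := by
    rw [show x = 2*(x/2) by ring, Real.sin_two_mul]; ring_nf
  have hta : Real.tan (x/2) ^ (2*α*(β-1) - 1)
      = Real.tan (x/2) ^ (2*α*(β-1)) / Real.tan (x/2) := by
    rw [Real.rpow_sub ht, Real.rpow_one]
  have hsb : Real.sin x ^ (β-2) = Real.sin x ^ (β-3) * Real.sin x := by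
    rw [show β-2 = (β-3)+1 by ring, Real.rpow_add_one hs.ne']
  have hsb2 : Real.sin x ^ (β-2-1) = Real.sin x ^ (β-3) := by rw [show β-2-1 = β-3 by ring]
  rw [hta, hsb, hsb2, Real.tan_eq_sin_div_cos]
  rw [hsin2]
  field_simp
  ring

/-- For `α ≥ 1` and `β` with `(2α+2)/(2α+1) ≤ β`, the function
`g_β(ρ) = tan^{2α(β−1)}(ρ/2) · sin^{β−2}(ρ) · (2α + cos ρ)` is nondecreasing on `(0,π)`. -/
theorem g_beta_monotone (α β : ℝ) (hα : 1 ≤ α) (hβ : (2*α + 2)/(2*α + 1) ≤ β) :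
    MonotoneOn (fun ρ : ℝ =>
      Real.tan (ρ/2) ^ (2*α*(β - 1)) * Real.sin ρ ^ (β - 2) * (2*α + Real.cos ρ))
      (Set.Ioo 0 π) := by
  have hβ' : 2*α+2 ≤ (2*α+1)*β := by
    rw [div_le_iff₀ (by linarith : (0:ℝ) < 2*α+1)] at hβ
    linarith
  apply monotoneOn_of_deriv_nonneg (convex_Ioo 0 π)
  · exact fun x hx => ((g_hasDerivAt α β hx).continuousAt).continuousWithinAt
  · rw [interior_Ioo]
    exact fun x hx => ((g_hasDerivAt α β hx).differentiableAt).differentiableWithinAt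
  · rw [interior_Ioo]
    intro x hx
    rw [(g_hasDerivAt α β hx).deriv]
    have ht : 0 < Real.tan (x/2) := by
      have hc2 : 0 < Real.cos (x/2) := Real.cos_pos_of_mem_Ioo
        ⟨by linarith [Real.pi_pos, hx.1], by linarith [hx.2]⟩
      have hs2 : 0 < Real.sin (x/2) := Real.sin_pos_of_pos_of_lt_pi
        (by linarith [hx.1]) (by linarith [Real.pi_pos, hx.2])
      rw [Real.tan_eq_sin_div_cos]; positivity
    have hs : 0 < Real.sin x := Real.sin_pos_of_pos_of_lt_pi hx.1 hx.2
    have hN := N_nonneg α β (Real.cos x) hα hβ' (Real.neg_one_le_cos x) (Real.cos_le_one x)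
    have hsin_sq : (Real.sin x)^2 = 1 - (Real.cos x)^2 := by
      have := Real.sin_sq_add_cos_sq x; linarith
    rw [hsin_sq]
    positivity
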